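/- arXiv:1807.00636 — 6 statements merged into one kernel-verified Lean document; each statement's English description precedes it below -/
import Mathlib

section
/- Let (σ_t)_{t ≥ 1} be an increasing positive real sequence with bounded differences σ_t − σ_{t−1} ≤ c for a finite constant c > 0, and set σ_0 = 0. Then for every T ≥ 1: Σ_{t=1}^T σ_t · ( 1/√(σ_{t−1} + c) − 1/√(σ_t + c) ) ≤ 2√(σ_{T−1} + c). -/
lemma soda_telescope (g : ℕ → ℝ) (T : ℕ) :
    ∑ t ∈ Finset.Icc 1 T, (g t - g (t - 1)) = g T - g 0 := by
  induction T with
  | zero => simp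
  | succ n ih =>
      rw [Finset.sum_Icc_succ_top (Nat.le_add_left 1 n), ih]
      simp

/-- Let `(σ_t)_{t ≥ 1}` be an increasing positive real sequence with bounded
differences `σ_t − σ_{t−1} ≤ c` for a finite constant `c > 0`, and set `σ_0 = 0`. Then for
every `T ≥ 1`:
`Σ_{t=1}^T σ_t · ( 1/√(σ_{t−1} + c) − 1/√(σ_t + c) ) ≤ 2√(σ_{T−1} + c)`. -/
theorem soda_technical_lemma
    (σ : ℕ → ℝ) (c : ℝ) (hc : 0 < c)
    (h0 : σ 0 = 0) (hmono : StrictMono σ)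
    (hdiff : ∀ t : ℕ, 1 ≤ t → σ t - σ (t - 1) ≤ c)
    (T : ℕ) (hT : 1 ≤ T) :
    ∑ t ∈ Finset.Icc 1 T,
        σ t * (1 / Real.sqrt (σ (t - 1) + c) - 1 / Real.sqrt (σ t + c))
      ≤ 2 * Real.sqrt (σ (T - 1) + c) := by
  have hσnn : ∀ t : ℕ, 0 ≤ σ t := by
    intro t
    have := hmono.monotone (Nat.zero_le t)
    linarith [this, h0.le, h0.ge]
  have hpos : ∀ t : ℕ, 0 < σ t + c := fun t => by linarith [hσnn t]
  -- termwise bound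
  have hterm : ∀ t ∈ Finset.Icc 1 T,
      σ t * (1 / Real.sqrt (σ (t - 1) + c) - 1 / Real.sqrt (σ t + c))
        ≤ (fun s => 2 * Real.sqrt (σ s + c)) t - (fun s => 2 * Real.sqrt (σ s + c)) (t - 1) := by
    intro t ht
    simp only
    have ht1 : 1 ≤ t := (Finset.mem_Icc.mp ht).1
    set a := σ (t - 1) + c with ha
    set b := σ t + c with hb
    have hapos : 0 < a := hpos _
    have hbpos : 0 < b := hpos _
    have hab : a ≤ b := by
      have : σ (t - 1) ≤ σ t := (hmono (Nat.sub_lt ht1 one_pos)).le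
      linarith
    have hsa : 0 < Real.sqrt a := Real.sqrt_pos.mpr hapos
    have hsb : 0 < Real.sqrt b := Real.sqrt_pos.mpr hbpos
    have hsab : Real.sqrt a ≤ Real.sqrt b := Real.sqrt_le_sqrt hab
    have hσa : σ t ≤ a := by have := hdiff t ht1; linarith
    have hx : 0 ≤ 1 / Real.sqrt a - 1 / Real.sqrt b := by
      have : 1 / Real.sqrt b ≤ 1 / Real.sqrt a := one_div_le_one_div_of_le hsa hsab
      linarith
    calc σ t * (1 / Real.sqrt a - 1 / Real.sqrt b)
        ≤ a * (1 / Real.sqrt a - 1 / Real.sqrt b) := mul_le_mul_of_nonneg_right hσa hx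
      _ ≤ 2 * Real.sqrt b - 2 * Real.sqrt a := by
          have ha2 : Real.sqrt a * Real.sqrt a = a := Real.mul_self_sqrt hapos.le
          have hb2 : Real.sqrt b * Real.sqrt b = b := Real.mul_self_sqrt hbpos.le
          rw [div_sub_div _ _ hsa.ne' hsb.ne', one_mul, mul_one, mul_div_assoc',
            div_le_iff₀ (by positivity)]
          nlinarith [mul_nonneg (mul_nonneg hsa.le (sub_nonneg.mpr hsab))
            (by nlinarith : (0:ℝ) ≤ 2 * Real.sqrt b - Real.sqrt a), ha2, hb2]
  have hsum := Finset.sum_le_sum hterm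
  have htel := soda_telescope (fun s => 2 * Real.sqrt (σ s + c)) T
  rw [htel] at hsum
  -- final bound
  have hfin : 2 * Real.sqrt (σ T + c) - 2 * Real.sqrt (σ 0 + c)
      ≤ 2 * Real.sqrt (σ (T - 1) + c) := by
    have h1 : σ T + c ≤ (σ (T - 1) + c) + c := by have := hdiff T hT; linarith
    have h2 : Real.sqrt (σ T + c) ≤ Real.sqrt (σ (T - 1) + c) + Real.sqrt c := by
      calc Real.sqrt (σ T + c) ≤ Real.sqrt ((σ (T - 1) + c) + c) := Real.sqrt_le_sqrt h1
        _ ≤ Real.sqrt (σ (T - 1) + c) + Real.sqrt c := by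
            have h := Real.sqrt_le_sqrt (show (σ (T - 1) + c) + c
                ≤ (Real.sqrt (σ (T - 1) + c) + Real.sqrt c)^2 by
              nlinarith [Real.sq_sqrt (hpos (T-1)).le, Real.sq_sqrt hc.le,
                Real.sqrt_nonneg (σ (T - 1) + c), Real.sqrt_nonneg c])
            rwa [Real.sqrt_sq (by positivity)] at h
    rw [h0]
    have : Real.sqrt (0 + c) = Real.sqrt c := by norm_num
    rw [this]
    linarith
  linarith
end

section
/- Fix K ≥ 2 and real numbers D_a and S_a for a = 1,…,K, and define for η > 0 the potential Φ(η) = (1/η) ln( (1/K) Σ_{a=1}^K exp(−η D_a − η² S_a) ) and the distribution q^η(a) = exp(−η D_a − η² S_a) / Σ_{a'=1}^K exp(−η D_{a'} − η² S_{a'}). Then Φ is differentiable on (0,∞) and Φ'(η) = (1/η²) · KL(q^η ‖ u) − Σ_{a=1}^K q^η(a) S_a, where u is the uniform distribution on {1,…,K} and KL(q ‖ u) = Σ_a q(a) ln( q(a)/(1/K) ) is the Kullback–Leibler divergence. -/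
/-- Fix `K ≥ 2` and real numbers `D_a`, `S_a` for `a = 1,…,K`, and define for
`η > 0` the potential `Φ(η) = (1/η) ln( (1/K) Σ_a exp(−η D_a − η² S_a) )` and the
distribution `q^η(a) = exp(−η D_a − η² S_a) / Σ_{a'} exp(−η D_{a'} − η² S_{a'})`.
Then `Φ` is differentiable on `(0,∞)` with
`Φ'(η) = (1/η²) · KL(q^η ‖ u) − Σ_a q^η(a) S_a`, where `u` is uniform on `{1,…,K}` and
`KL(q ‖ u) = Σ_a q(a) ln( q(a)/(1/K) )`. -/
theorem potential_derivative
    (K : ℕ) (hK : 2 ≤ K) (D S : Fin K → ℝ)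
    (q : ℝ → Fin K → ℝ)
    (hq : ∀ η a, q η a = Real.exp (-η * D a - η ^ 2 * S a) /
        ∑ a', Real.exp (-η * D a' - η ^ 2 * S a'))
    (η : ℝ) (hη : 0 < η) :
    HasDerivAt
      (fun x : ℝ => (1 / x) * Real.log ((1 / K) * ∑ a, Real.exp (-x * D a - x ^ 2 * S a)))
      ((1 / η ^ 2) * (∑ a, q η a * Real.log (q η a / (1 / K))) - ∑ a, q η a * S a)
      η := by
  have hKpos : (0:ℝ) < K := by positivity
  have hNE : Nonempty (Fin K) := ⟨⟨0, by omega⟩⟩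
  set E : Fin K → ℝ := fun a => Real.exp (-η * D a - η ^ 2 * S a) with hE
  set Z : ℝ := ∑ a, E a with hZdef
  have hZpos : 0 < Z := Finset.sum_pos (fun a _ => Real.exp_pos _) Finset.univ_nonempty
  set Z' : ℝ := ∑ a, E a * (-D a - 2 * η * S a) with hZ'
  have hZd : HasDerivAt (fun x : ℝ => ∑ a, Real.exp (-x * D a - x ^ 2 * S a)) Z' η := by
    apply HasDerivAt.fun_sum
    intro a _
    have h1 : HasDerivAt (fun x : ℝ => -x * D a - x ^ 2 * S a) (-D a - 2 * η * S a) η := by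
      have h2 := (((hasDerivAt_id η).neg.mul_const (D a)).sub ((hasDerivAt_pow 2 η).mul_const (S a)))
      exact h2.congr_deriv (by ring)
    exact h1.exp
  have hg : HasDerivAt (fun x : ℝ => (1 / (K:ℝ)) * ∑ a, Real.exp (-x * D a - x ^ 2 * S a))
      ((1 / (K:ℝ)) * Z') η := hZd.const_mul _
  have hgne : (1 / (K:ℝ)) * Z ≠ 0 := by positivity
  have hlog : HasDerivAt (fun x : ℝ => Real.log ((1 / (K:ℝ)) * ∑ a, Real.exp (-x * D a - x ^ 2 * S a)))
      (((1 / (K:ℝ)) * Z') / ((1 / (K:ℝ)) * Z)) η := hg.log hgne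
  have hinv : HasDerivAt (fun x : ℝ => 1 / x) (-(1 / η ^ 2)) η := by
    have := hasDerivAt_inv hη.ne'
    simpa [one_div] using this
  have hmain := hinv.mul hlog
  refine hmain.congr_deriv ?_
  symm
  -- value equality
  have hqv : ∀ a, q η a = E a / Z := fun a => by rw [hq]
  have hEpos : ∀ a, 0 < E a := fun a => Real.exp_pos _
  set L : ℝ := Real.log Z with hL
  have key : ∀ a, q η a * Real.log (q η a / (1 / K)) =
      (E a / Z) * (-η * D a - η ^ 2 * S a) - (E a / Z) * L + (E a / Z) * Real.log K := by
    intro a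
    rw [hqv a]
    rw [Real.log_div (by positivity : (0:ℝ) < E a / Z).ne' (by positivity : (0:ℝ) < 1/(K:ℝ)).ne',
      one_div, Real.log_inv, Real.log_div (hEpos a).ne' hZpos.ne', hE]
    simp only [Real.log_exp]
    ring
  have hsum1 : (∑ a, E a / Z) = 1 := by
    rw [← Finset.sum_div, ← hZdef, div_self hZpos.ne']
  have hexpand : (∑ a, q η a * Real.log (q η a / (1 / K))) =
      (∑ a, (E a / Z) * (-η * D a - η ^ 2 * S a)) - L + Real.log K := by
    rw [Finset.sum_congr rfl (fun a _ => key a)]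
    rw [Finset.sum_add_distrib, Finset.sum_sub_distrib, ← Finset.sum_mul, ← Finset.sum_mul,
      hsum1, one_mul, one_mul]
  have hqS : (∑ a, q η a * S a) = (∑ a, E a * S a) / Z := by
    rw [Finset.sum_div]
    exact Finset.sum_congr rfl fun a _ => by rw [hqv a, div_mul_eq_mul_div]
  have hfrac : ((1 / (K:ℝ)) * Z') / ((1 / (K:ℝ)) * Z) = Z' / Z := by
    rw [mul_div_mul_left _ _ (by positivity : (1 / (K:ℝ)) ≠ 0)]
  have hlogZK : Real.log ((1 / (K:ℝ)) * Z) = L - Real.log K := by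
    rw [Real.log_mul (by positivity) hZpos.ne', one_div, Real.log_inv]
    ring
  set A : ℝ := ∑ a, (E a / Z) * (-η * D a - η ^ 2 * S a) with hA
  set B : ℝ := ∑ a, E a * S a with hB
  have hrel : η * Z' = A * Z - η ^ 2 * B := by
    rw [hA, hZ', hB, Finset.mul_sum, Finset.sum_mul, Finset.mul_sum, ← Finset.sum_sub_distrib]
    refine Finset.sum_congr rfl fun a _ => ?_
    field_simp
    ring
  rw [hexpand, hqS, hfrac, hlogZK]
  field_simp
  linear_combination -hrel
end

section
/- Fix K ≥ 2 and real numbers D_a and nonnegative real numbers S_a for a = 1,…,K, and define for η > 0 the potential Φ(η) = (1/η) ln( (1/K) Σ_{a=1}^K exp(−η D_a − η² S_a) ). Then for any 0 < η' ≤ η: Φ(η') − Φ(η) ≤ (η − η') · max_a S_a. -/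
/-- Fix `K ≥ 2`, real numbers `D_a` and nonnegative real numbers `S_a` for
`a = 1,…,K`, and define for `η > 0` the potential
`Φ(η) = (1/η) ln( (1/K) Σ_a exp(−η D_a − η² S_a) )`.
Then for any `0 < η' ≤ η`: `Φ(η') − Φ(η) ≤ (η − η') · max_a S_a`. -/
theorem potential_difference_bound
    (K : ℕ) (hK : 2 ≤ K) (D S : Fin K → ℝ) (hS : ∀ a, 0 ≤ S a)
    (Φ : ℝ → ℝ)
    (hΦ : ∀ η : ℝ, Φ η = (1 / η) * Real.log ((1 / K) * ∑ a, Real.exp (-η * D a - η ^ 2 * S a)))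
    (η' η : ℝ) (hη' : 0 < η') (hle : η' ≤ η) :
    Φ η' - Φ η ≤ (η - η') * ⨆ a, S a := by
  haveI : NeZero K := ⟨by omega⟩
  have hKpos : (0:ℝ) < (K:ℝ) := by
    have : 0 < K := by omega
    exact_mod_cast this
  set M := ⨆ a, S a with hMdef
  have hSM : ∀ a, S a ≤ M := fun a => le_ciSup (Set.finite_range S).bddAbove a
  have hη : 0 < η := lt_of_lt_of_le hη' hle
  have key : ∀ t : ℝ, 0 < t →
      Φ t + t * M = (1 / t) * Real.log ((1 / K) *
        ∑ a, Real.exp (t * (-(D a) + t * (M - S a)))) := by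
    intro t ht
    have hsum : (0:ℝ) < ∑ a, Real.exp (-t * D a - t ^ 2 * S a) :=
      Finset.sum_pos (fun a _ => Real.exp_pos _) Finset.univ_nonempty
    have hexp : ∀ a ∈ Finset.univ, Real.exp (t * (-(D a) + t * (M - S a)))
        = Real.exp (-t * D a - t ^ 2 * S a) * Real.exp (t ^ 2 * M) := by
      intro a _
      rw [← Real.exp_add]
      ring_nf
    rw [hΦ t, Finset.sum_congr rfl hexp, ← Finset.sum_mul,
      show (1/(K:ℝ)) * ((∑ a, Real.exp (-t * D a - t ^ 2 * S a)) * Real.exp (t ^ 2 * M))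
        = ((1/(K:ℝ)) * ∑ a, Real.exp (-t * D a - t ^ 2 * S a)) * Real.exp (t ^ 2 * M) by ring,
      Real.log_mul (by positivity) (Real.exp_ne_zero _), Real.log_exp]
    field_simp
  -- step 1: replace η'² by η'η in the exponent
  set y : Fin K → ℝ := fun a => -(D a) + η * (M - S a) with hy
  have hsum1 : (0:ℝ) < ∑ a, Real.exp (η' * (-(D a) + η' * (M - S a))) :=
    Finset.sum_pos (fun a _ => Real.exp_pos _) Finset.univ_nonempty
  have hsum2 : (0:ℝ) < ∑ a, Real.exp (η' * y a) :=
    Finset.sum_pos (fun a _ => Real.exp_pos _) Finset.univ_nonempty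
  have hsum3 : (0:ℝ) < ∑ a, Real.exp (η * y a) :=
    Finset.sum_pos (fun a _ => Real.exp_pos _) Finset.univ_nonempty
  have step1 : Φ η' + η' * M ≤ (1 / η') * Real.log ((1 / K) * ∑ a, Real.exp (η' * y a)) := by
    rw [key η' hη']
    have hmono : ∑ a, Real.exp (η' * (-(D a) + η' * (M - S a))) ≤ ∑ a, Real.exp (η' * y a) := by
      apply Finset.sum_le_sum
      intro a _
      apply Real.exp_le_exp.2
      simp only [hy]
      have h1 : 0 ≤ M - S a := sub_nonneg.2 (hSM a)
      nlinarith [mul_nonneg (mul_nonneg hη'.le (sub_nonneg.2 hle)) h1]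
    have := Real.log_le_log (by positivity)
      (mul_le_mul_of_nonneg_left hmono (by positivity : (0:ℝ) ≤ 1 / K))
    exact mul_le_mul_of_nonneg_left this (by positivity)
  -- step 2: power-mean inequality
  have step2 : (1 / η') * Real.log ((1 / K) * ∑ a, Real.exp (η' * y a))
      ≤ (1 / η) * Real.log ((1 / K) * ∑ a, Real.exp (η * y a)) := by
    set p : ℝ := η / η' with hp
    have hp1 : 1 ≤ p := (one_le_div hη').2 hle
    have hw' : ∑ _a : Fin K, (1 / (K:ℝ)) = 1 := by
      rw [Finset.sum_const, Finset.card_univ, Fintype.card_fin, nsmul_eq_mul]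
      field_simp
    have hpm := Real.rpow_arith_mean_le_arith_mean_rpow Finset.univ
      (fun _ : Fin K => (1 / (K:ℝ))) (fun a => Real.exp (η' * y a))
      (fun _ _ => by positivity) hw' (fun a _ => (Real.exp_pos _).le) hp1
    have hzp : ∀ a : Fin K, Real.exp (η' * y a) ^ p = Real.exp (η * y a) := by
      intro a
      rw [← Real.exp_mul]
      congr 1
      rw [hp]
      field_simp
    rw [← Finset.mul_sum, ← Finset.mul_sum] at hpm
    simp only [hzp] at hpm
    have hlog := Real.log_le_log (by positivity :
      (0:ℝ) < ((1 / (K:ℝ)) * ∑ a, Real.exp (η' * y a)) ^ p) hpm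
    rw [Real.log_rpow (by positivity)] at hlog
    have h2 : (1 / η') * Real.log ((1 / K) * ∑ a, Real.exp (η' * y a))
        = (1 / η) * (p * Real.log ((1 / K) * ∑ a, Real.exp (η' * y a))) := by
      rw [hp]
      field_simp
    rw [h2]
    exact mul_le_mul_of_nonneg_left hlog (by positivity)
  -- step 3: conclude
  have step3 : (1 / η) * Real.log ((1 / K) * ∑ a, Real.exp (η * y a)) = Φ η + η * M := by
    rw [key η hη]
  have hfinal : Φ η' + η' * M ≤ Φ η + η * M := le_trans step1 (step2.trans_eq step3)
  nlinarith
end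

section
/- Let K ≥ 2 and let D_t(a) be arbitrary reals and S_t(a) nonnegative reals for t ≥ 0 and a = 1,…,K, with S_0(a) = 0, S_t(a) nondecreasing in t, and S_t(a) − S_{t−1}(a) ≤ (K−1)² for all t and a. Define Φ_t(η) = (1/η) ln( (1/K) Σ_{a=1}^K exp(−η D_t(a) − η² S_t(a)) ) and learning rates η_t = √( ln K / (max_a S_{t−1}(a) + (K−1)²) ). Then for every T ≥ 1: Σ_{t=1}^T ( Φ_t(η_{t+1}) − Φ_t(η_t) ) ≤ 2 √(ln K) · √( max_a S_{T−1}(a) + (K−1)² ). -/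
/-- Core per-step inequality: for `0 < b ≤ c`,
`Φ(b) ≤ Φ(c) + (c-b) * M` where `M` bounds the `S`-values. -/
lemma phi_step_bound (K : ℕ) (hK : 2 ≤ K) (D S : Fin K → ℝ)
    (hS : ∀ a, 0 ≤ S a) (M : ℝ) (hSM : ∀ a, S a ≤ M)
    (b c : ℝ) (hb : 0 < b) (hbc : b ≤ c) :
    (1 / b) * Real.log ((1 / K) * ∑ j, Real.exp (-b * D j - b ^ 2 * S j)) ≤
      (1 / c) * Real.log ((1 / K) * ∑ j, Real.exp (-c * D j - c ^ 2 * S j))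
        + (c - b) * M := by
  have hc : 0 < c := lt_of_lt_of_le hb hbc
  have hKpos : (0:ℝ) < K := by positivity
  set θ : ℝ := b / c with hθdef
  have hθ0 : 0 < θ := div_pos hb hc
  have hθ1 : θ ≤ 1 := by rw [hθdef, div_le_one hc]; exact hbc
  set R : ℝ := (1 / K) * ∑ j, Real.exp (-c * D j - c ^ 2 * S j) with hR
  have hRpos : 0 < R := by
    apply mul_pos (by positivity)
    apply Finset.sum_pos (fun j _ => Real.exp_pos _)
    exact ⟨⟨0, by omega⟩, Finset.mem_univ _⟩
  have step1 : ∀ j : Fin K, Real.exp (-b * D j - b ^ 2 * S j)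
      ≤ Real.exp (b * (c - b) * M) * (Real.exp (-c * D j - c ^ 2 * S j)) ^ θ := by
    intro j
    rw [← Real.exp_mul, ← Real.exp_add]
    apply Real.exp_le_exp.mpr
    have h1 : b * (c - b) * S j ≤ b * (c - b) * M := by
      apply mul_le_mul_of_nonneg_left (hSM j)
      nlinarith
    have h2 : (-c * D j - c ^ 2 * S j) * θ = -b * D j - c * b * S j := by
      rw [hθdef]; field_simp
    nlinarith [h1, h2]
  have jensen : (∑ j, (1 / K : ℝ) * (Real.exp (-c * D j - c ^ 2 * S j)) ^ θ) ≤ R ^ θ := by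
    have hw : ∀ i ∈ (Finset.univ : Finset (Fin K)), (0:ℝ) ≤ (1 / K : ℝ) := fun _ _ => by positivity
    have hw' : ∑ _i ∈ (Finset.univ : Finset (Fin K)), (1 / K : ℝ) = 1 := by
      rw [Finset.sum_const, Finset.card_univ, Fintype.card_fin, nsmul_eq_mul]
      field_simp
    have hz : ∀ i ∈ (Finset.univ : Finset (Fin K)),
        (0:ℝ) ≤ (Real.exp (-c * D i - c ^ 2 * S i)) ^ θ :=
      fun i _ => Real.rpow_nonneg (Real.exp_pos _).le _
    have hp : (1:ℝ) ≤ 1 / θ := by rw [le_div_iff₀ hθ0]; linarith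
    have h := Real.arith_mean_le_rpow_mean Finset.univ (fun _ => (1 / K : ℝ))
      (fun i => (Real.exp (-c * D i - c ^ 2 * S i)) ^ θ) hw hw' hz hp
    rw [one_div_one_div] at h
    refine h.trans_eq ?_
    congr 1
    rw [hR, Finset.mul_sum]
    refine Finset.sum_congr rfl fun j _ => ?_
    congr 1
    rw [← Real.rpow_mul (Real.exp_pos _).le, mul_one_div, div_self (ne_of_gt hθ0),
      Real.rpow_one]
  have key : (1 / K : ℝ) * ∑ j, Real.exp (-b * D j - b ^ 2 * S j)
      ≤ Real.exp (b * (c - b) * M) * R ^ θ := by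
    calc (1 / K : ℝ) * ∑ j, Real.exp (-b * D j - b ^ 2 * S j)
        ≤ (1 / K : ℝ) * ∑ j, Real.exp (b * (c - b) * M) *
            (Real.exp (-c * D j - c ^ 2 * S j)) ^ θ := by
          exact mul_le_mul_of_nonneg_left
            (Finset.sum_le_sum fun j _ => step1 j) (by positivity)
      _ = Real.exp (b * (c - b) * M) *
            ∑ j, (1 / K : ℝ) * (Real.exp (-c * D j - c ^ 2 * S j)) ^ θ := by
          rw [Finset.mul_sum, Finset.mul_sum]
          exact Finset.sum_congr rfl fun j _ => by ring
      _ ≤ Real.exp (b * (c - b) * M) * R ^ θ :=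
          mul_le_mul_of_nonneg_left jensen (Real.exp_pos _).le
  have hLpos : 0 < (1 / K : ℝ) * ∑ j, Real.exp (-b * D j - b ^ 2 * S j) := by
    apply mul_pos (by positivity)
    apply Finset.sum_pos (fun j _ => Real.exp_pos _)
    exact ⟨⟨0, by omega⟩, Finset.mem_univ _⟩
  have hlog : Real.log ((1 / K : ℝ) * ∑ j, Real.exp (-b * D j - b ^ 2 * S j))
      ≤ b * (c - b) * M + θ * Real.log R := by
    calc Real.log ((1 / K : ℝ) * ∑ j, Real.exp (-b * D j - b ^ 2 * S j))
        ≤ Real.log (Real.exp (b * (c - b) * M) * R ^ θ) :=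
          Real.log_le_log hLpos key
      _ = b * (c - b) * M + θ * Real.log R := by
          rw [Real.log_mul (Real.exp_pos _).ne' (Real.rpow_pos_of_pos hRpos _).ne',
            Real.log_exp, Real.log_rpow hRpos]
  calc (1 / b) * Real.log ((1 / K : ℝ) * ∑ j, Real.exp (-b * D j - b ^ 2 * S j))
      ≤ (1 / b) * (b * (c - b) * M + θ * Real.log R) :=
        mul_le_mul_of_nonneg_left hlog (by positivity)
    _ = (1 / c) * Real.log R + (c - b) * M := by
        rw [hθdef]; field_simp; ring

/-- `√(x+y) ≤ √x + √y`. -/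
lemma sqrt_add_le' (x y : ℝ) (hx : 0 ≤ x) (hy : 0 ≤ y) :
    Real.sqrt (x + y) ≤ Real.sqrt x + Real.sqrt y := by
  rw [show x + y = Real.sqrt x ^ 2 + Real.sqrt y ^ 2 by
    rw [Real.sq_sqrt hx, Real.sq_sqrt hy]]
  have h : Real.sqrt x ^ 2 + Real.sqrt y ^ 2 ≤ (Real.sqrt x + Real.sqrt y) ^ 2 := by
    nlinarith [Real.sqrt_nonneg x, Real.sqrt_nonneg y]
  calc Real.sqrt (Real.sqrt x ^ 2 + Real.sqrt y ^ 2)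
      ≤ Real.sqrt ((Real.sqrt x + Real.sqrt y) ^ 2) := Real.sqrt_le_sqrt h
    _ = Real.sqrt x + Real.sqrt y := Real.sqrt_sq (by positivity)

/-- `m (L/√u - L/√v) ≤ L (√v - √u)` when `0 ≤ m ≤ u ≤ v`, `0 < u`, `0 ≤ L`. -/
lemma step_telescope (m u v L : ℝ) (hL : 0 ≤ L) (hu : 0 < u) (huv : u ≤ v)
    (hmu : m ≤ u) (hm : 0 ≤ m) :
    m * (L / Real.sqrt u - L / Real.sqrt v) ≤ L * (Real.sqrt v - Real.sqrt u) := by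
  set x := Real.sqrt u with hxdef
  set y := Real.sqrt v with hydef
  have hx : 0 < x := Real.sqrt_pos.mpr hu
  have hy : 0 < y := Real.sqrt_pos.mpr (lt_of_lt_of_le hu huv)
  have hxy : x ≤ y := Real.sqrt_le_sqrt huv
  have hx2 : x ^ 2 = u := Real.sq_sqrt hu.le
  have hdiff : L / x - L / y = L * (y - x) / (x * y) := by field_simp
  have h0 : 0 ≤ L * (y - x) / (x * y) := by
    apply div_nonneg _ (by positivity)
    apply mul_nonneg hL; linarith
  calc m * (L / x - L / y) = m * (L * (y - x) / (x * y)) := by rw [hdiff]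
    _ ≤ x ^ 2 * (L * (y - x) / (x * y)) := by
        apply mul_le_mul_of_nonneg_right _ h0; rw [hx2]; exact hmu
    _ = L * (y - x) * (x / y) := by field_simp
    _ ≤ L * (y - x) * 1 := by
        apply mul_le_mul_of_nonneg_left _ (by apply mul_nonneg hL; linarith)
        rw [div_le_one hy]; exact hxy
    _ = L * (y - x) := by ring

/-- Let `K ≥ 2`, let `D_t(a)` be arbitrary reals and `S_t(a)` nonnegative
reals for `t ≥ 0` and `a = 1,…,K`, with `S_0(a) = 0`, `S_t(a)` nondecreasing in `t`, and
`S_t(a) − S_{t−1}(a) ≤ (K−1)²`. Define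
`Φ_t(η) = (1/η) ln( (1/K) Σ_a exp(−η D_t(a) − η² S_t(a)) )` and learning rates
`η_t = √( ln K / (max_a S_{t−1}(a) + (K−1)²) )`. Then for every `T ≥ 1`:
`Σ_{t=1}^T ( Φ_t(η_{t+1}) − Φ_t(η_t) ) ≤ 2 √(ln K) · √( max_a S_{T−1}(a) + (K−1)² )`. -/
theorem potential_differences_sum_bound
    (K : ℕ) (hK : 2 ≤ K)
    (D S : ℕ → Fin K → ℝ)
    (hS0 : ∀ a, S 0 a = 0)
    (hS_nonneg : ∀ t a, 0 ≤ S t a)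
    (hS_mono : ∀ t a, S t a ≤ S (t + 1) a)
    (hS_step : ∀ t a, S (t + 1) a - S t a ≤ ((K : ℝ) - 1) ^ 2)
    (Φ : ℕ → ℝ → ℝ)
    (hΦ : ∀ t x, Φ t x =
      (1 / x) * Real.log ((1 / K) * ∑ a, Real.exp (-x * D t a - x ^ 2 * S t a)))
    (η : ℕ → ℝ)
    (hη : ∀ t : ℕ, 1 ≤ t →
      η t = Real.sqrt (Real.log K / ((⨆ a, S (t - 1) a) + ((K : ℝ) - 1) ^ 2)))
    (T : ℕ) (hT : 1 ≤ T) :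
    ∑ t ∈ Finset.Icc 1 T, (Φ t (η (t + 1)) - Φ t (η t))
      ≤ 2 * Real.sqrt (Real.log K) *
          Real.sqrt ((⨆ a, S (T - 1) a) + ((K : ℝ) - 1) ^ 2) := by
  haveI : Nonempty (Fin K) := ⟨⟨0, by omega⟩⟩
  set c : ℝ := ((K : ℝ) - 1) ^ 2 with hcdef
  have hK2 : (2:ℝ) ≤ K := by exact_mod_cast hK
  have hc : 0 < c := by rw [hcdef]; nlinarith
  have hL : 0 < Real.log K := Real.log_pos (by linarith)
  set L : ℝ := Real.sqrt (Real.log K) with hLdef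
  have hL0 : 0 ≤ L := Real.sqrt_nonneg _
  set M : ℕ → ℝ := fun t => ⨆ a, S t a with hMdef
  have hbdd : ∀ t, BddAbove (Set.range (S t)) := fun t =>
    Set.Finite.bddAbove (Set.finite_range _)
  have hSM : ∀ t a, S t a ≤ M t := fun t a => le_ciSup (hbdd t) a
  have hM0 : ∀ t, 0 ≤ M t := fun t =>
    le_trans (hS_nonneg t (Classical.arbitrary _)) (hSM t _)
  have hMmono : ∀ t, M t ≤ M (t + 1) := fun t =>
    ciSup_mono (hbdd (t + 1)) (hS_mono t)
  have hMstep : ∀ t, M (t + 1) ≤ M t + c := fun t =>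
    ciSup_le fun a => by
      have h1 := hS_step t a; have h2 := hSM t a; linarith
  have hMzero : M 0 = 0 := by
    rw [hMdef]
    simp only [hS0]
    exact ciSup_const
  -- explicit form of η
  have hηval : ∀ t, η (t + 1) = L / Real.sqrt (M t + c) := by
    intro t
    rw [hη (t + 1) (by omega)]
    simp only [Nat.add_sub_cancel]
    rw [Real.sqrt_div hL.le, hLdef, hMdef]
  set f : ℕ → ℝ := fun t => Real.sqrt (M t + c) with hfdef
  have hfpos : ∀ t, 0 < f t := fun t => Real.sqrt_pos.mpr (by have := hM0 t; linarith)
  -- per-term bound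
  have hterm : ∀ t ∈ Finset.Icc 1 T,
      Φ t (η (t + 1)) - Φ t (η t) ≤ L * (f t - f (t - 1)) := by
    intro t ht
    rw [Finset.mem_Icc] at ht
    obtain ⟨s, rfl⟩ : ∃ s, t = s + 1 := ⟨t - 1, by omega⟩
    have hη1 : η (s + 1) = L / Real.sqrt (M s + c) := hηval s
    have hη2 : η (s + 1 + 1) = L / Real.sqrt (M (s + 1) + c) := hηval (s + 1)
    have hb : 0 < η (s + 1 + 1) := by
      rw [hη2]
      exact div_pos (Real.sqrt_pos.mpr hL) (hfpos (s + 1))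
    have hbc : η (s + 1 + 1) ≤ η (s + 1) := by
      rw [hη1, hη2]
      apply div_le_div_of_nonneg_left hL0 (hfpos s)
      exact Real.sqrt_le_sqrt (by have := hMmono s; linarith)
    have hmain := phi_step_bound K hK (D (s + 1)) (S (s + 1))
      (hS_nonneg (s + 1)) (M (s + 1)) (hSM (s + 1))
      (η (s + 1 + 1)) (η (s + 1)) hb hbc
    rw [← hΦ (s + 1) (η (s + 1 + 1)), ← hΦ (s + 1) (η (s + 1))] at hmain
    have htel : M (s + 1) * (η (s + 1) - η (s + 1 + 1)) ≤ L * (f (s + 1) - f s) := by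
      rw [hη1, hη2, hfdef]
      have h1 : M s + c ≤ M (s + 1) + c := by have := hMmono s; linarith
      have h2 : M (s + 1) ≤ M s + c := hMstep s
      have h3 : 0 < M s + c := by have := hM0 s; linarith
      have := step_telescope (M (s + 1)) (M s + c) (M (s + 1) + c) L hL0 h3 h1 h2
        (hM0 (s + 1))
      simpa [mul_sub] using this
    simp only [Nat.add_sub_cancel]
    calc Φ (s + 1) (η (s + 1 + 1)) - Φ (s + 1) (η (s + 1))
        ≤ (η (s + 1) - η (s + 1 + 1)) * M (s + 1) := by linarith
      _ = M (s + 1) * (η (s + 1) - η (s + 1 + 1)) := by ring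
      _ ≤ L * (f (s + 1) - f s) := htel
  -- telescoping sum
  have hsum : ∑ t ∈ Finset.Icc 1 T, L * (f t - f (t - 1)) = L * (f T - f 0) := by
    rw [← Finset.Ico_add_one_right_eq_Icc, Finset.sum_Ico_eq_sum_range]
    have : ∀ i ∈ Finset.range (T + 1 - 1), L * (f (1 + i) - f (1 + i - 1))
        = L * f (i + 1) - L * f i := by
      intro i _
      have h2 : 1 + i - 1 = i := by omega
      have h1 : 1 + i = i + 1 := by omega
      rw [h2, h1]; ring
    rw [Finset.sum_congr rfl this, Finset.sum_range_sub (fun i => L * f i)]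
    have hT1 : T + 1 - 1 = T := by omega
    rw [hT1]; ring
  -- final bound
  have hfT : f T - f 0 ≤ f (T - 1) := by
    have hT1 : T - 1 + 1 = T := by omega
    have h1 : M T ≤ M (T - 1) + c := by
      have := hMstep (T - 1); rwa [hT1] at this
    have h2 : f T ≤ Real.sqrt ((M (T - 1) + c) + c) := by
      apply Real.sqrt_le_sqrt; linarith
    have h3 : Real.sqrt ((M (T - 1) + c) + c) ≤ f (T - 1) + Real.sqrt c := by
      have := sqrt_add_le' (M (T - 1) + c) c (by have := hM0 (T - 1); linarith) hc.le
      simpa [hfdef] using this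
    have h4 : f 0 = Real.sqrt c := by rw [hfdef]; simp [hMzero]
    rw [h4]; linarith
  calc ∑ t ∈ Finset.Icc 1 T, (Φ t (η (t + 1)) - Φ t (η t))
      ≤ ∑ t ∈ Finset.Icc 1 T, L * (f t - f (t - 1)) := Finset.sum_le_sum hterm
    _ = L * (f T - f 0) := hsum
    _ ≤ L * f (T - 1) := mul_le_mul_of_nonneg_left hfT hL0
    _ ≤ 2 * L * f (T - 1) := by
        have := (hfpos (T - 1)).le
        nlinarith
end

section
/- Let Y_1, …, Y_T be {0,1}-valued random variables adapted to a filtration (F_t) such that P(Y_t = 1 | F_{t−1}) ≤ p almost surely for all t, where p ∈ [0,1]. Let x_1, …, x_T be i.i.d. Bernoulli random variables with parameter p. Then for every real α: P( Σ_{t=1}^T Y_t > α ) ≤ P( Σ_{t=1}^T x_t > α ). -/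
open MeasureTheory ProbabilityTheory

/-- Let `Y_1, …, Y_T` be `{0,1}`-valued random variables adapted to a
filtration `(F_t)` such that `P(Y_t = 1 | F_{t−1}) ≤ p` almost surely for all `t`, where
`p ∈ [0,1]`. Let `x_1, …, x_T` be i.i.d. Bernoulli random variables with parameter `p`.
Then for every real `α`: `P( Σ_{t=1}^T Y_t > α ) ≤ P( Σ_{t=1}^T x_t > α )`.
(Here `Y_t` corresponds to `Y (t+1)` for `t ∈ {0,…,T−1}`, conditioned on `ℱ t`, and since
`Y_t ∈ {0,1}` the conditional probability `P(Y_t = 1 | F_{t−1})` equals the conditional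
expectation `μ[Y_t | F_{t−1}]`.) -/
theorem stochastic_domination_by_bernoulli
    {Ω Ω' : Type*} [m : MeasurableSpace Ω] [m' : MeasurableSpace Ω']
    (μ : Measure Ω) (μ' : Measure Ω')
    [IsProbabilityMeasure μ] [IsProbabilityMeasure μ']
    (T : ℕ) (p : ℝ) (hp : p ∈ Set.Icc (0 : ℝ) 1)
    (ℱ : Filtration ℕ m)
    (Y : ℕ → Ω → ℝ)
    (hY01 : ∀ t < T, ∀ ω, Y (t + 1) ω = 0 ∨ Y (t + 1) ω = 1)
    (hY_adapted : ∀ t < T, StronglyMeasurable[ℱ (t + 1)] (Y (t + 1)))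
    (hY_cond : ∀ t < T, μ[Y (t + 1)|ℱ t] ≤ᵐ[μ] fun _ => p)
    (x : Fin T → Ω' → ℝ)
    (hx_meas : ∀ i, Measurable (x i))
    (hx_indep : iIndepFun x μ')
    (hx_law : ∀ i, μ'.map (x i) =
      ENNReal.ofReal (1 - p) • Measure.dirac (0 : ℝ) + ENNReal.ofReal p • Measure.dirac 1)
    (α : ℝ) :
    μ {ω | α < ∑ t ∈ Finset.range T, Y (t + 1) ω}
      ≤ μ' {ω | α < ∑ i, x i ω} := by
  obtain ⟨hp0, hp1⟩ := hp
  -- partial sums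
  set S : ℕ → Ω → ℝ := fun n ω => ∑ t ∈ Finset.range n, Y (t + 1) ω with hSdef
  set S' : ℕ → Ω' → ℝ :=
    fun n ω => ∑ j ∈ Finset.univ.filter (fun j : Fin T => (j : ℕ) < n), x j ω with hS'def
  -- measurability of partial sums
  have hYm : ∀ t < T, Measurable[ℱ (t + 1)] (Y (t + 1)) :=
    fun t ht => (hY_adapted t ht).measurable
  have hSmeasF : ∀ n ≤ T, Measurable[ℱ n] (S n) := by
    intro n hn
    apply Finset.measurable_sum
    intro t ht
    have ht' : t < T := lt_of_lt_of_le (Finset.mem_range.mp ht) hn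
    exact (hYm t ht').mono (ℱ.mono (Finset.mem_range.mp ht)) le_rfl
  have hSmeas : ∀ n ≤ T, Measurable (S n) :=
    fun n hn => ((hSmeasF n hn).mono (ℱ.le n) le_rfl)
  have hS'meas : ∀ n, Measurable (S' n) := by
    intro n
    apply Finset.measurable_sum
    intro j _
    exact hx_meas j
  -- integrability of Y (n+1)
  have hYInt : ∀ n < T, Integrable (Y (n + 1)) μ := by
    intro n hn
    refine (integrable_const (1 : ℝ)).mono'
      (((hYm n hn).mono (ℱ.le (n + 1)) le_rfl).aestronglyMeasurable)
      (ae_of_all _ fun ω => ?_)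
    rcases hY01 n hn ω with h | h <;> simp [h]
  -- key one-step inequality on the μ side
  have claim1 : ∀ n < T, ∀ β : ℝ,
      (μ {ω | β < S (n + 1) ω}).toReal ≤
        (1 - p) * (μ {ω | β < S n ω}).toReal + p * (μ {ω | β - 1 < S n ω}).toReal := by
    intro n hn β
    have hnT : n ≤ T := le_of_lt hn
    set A : Set Ω := {ω | β < S (n + 1) ω} with hA
    set C : Set Ω := {ω | β < S n ω} with hC
    set D : Set Ω := {ω | β - 1 < S n ω} with hD
    set B : Set Ω := D \ C with hB
    have hAm : MeasurableSet A := measurableSet_lt measurable_const (hSmeas (n + 1) hn)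
    have hCm : MeasurableSet C := measurableSet_lt measurable_const (hSmeas n hnT)
    have hDm : MeasurableSet D := measurableSet_lt measurable_const (hSmeas n hnT)
    have hCF : MeasurableSet[ℱ n] C := measurableSet_lt measurable_const (hSmeasF n hnT)
    have hDF : MeasurableSet[ℱ n] D := measurableSet_lt measurable_const (hSmeasF n hnT)
    have hBm : MeasurableSet B := hDm.diff hCm
    have hBF : MeasurableSet[ℱ n] B := hDF.diff hCF
    have hCD : C ⊆ D := by
      intro ω hω
      simp only [hC, hD, Set.mem_setOf_eq] at *
      linarith
    have hSsucc : ∀ ω, S (n + 1) ω = S n ω + Y (n + 1) ω := by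
      intro ω; exact Finset.sum_range_succ _ n
    -- pointwise indicator identity
    have hkey : ∀ ω, A.indicator (fun _ => (1 : ℝ)) ω
        = C.indicator (fun _ => (1 : ℝ)) ω + B.indicator (Y (n + 1)) ω := by
      intro ω
      simp only [Set.indicator_apply]
      rcases hY01 n hn ω with h0 | h1
      · have hAC : ω ∈ A ↔ ω ∈ C := by
          simp only [hA, hC, Set.mem_setOf_eq, hSsucc ω, h0, add_zero]
        have hBz : (if ω ∈ B then Y (n + 1) ω else 0) = 0 := by
          by_cases hb : ω ∈ B
          · rw [if_pos hb, h0]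
          · rw [if_neg hb]
        rw [hBz, add_zero]
        by_cases hc : ω ∈ C
        · rw [if_pos (hAC.mpr hc), if_pos hc]
        · rw [if_neg (fun h => hc (hAC.mp h)), if_neg hc]
      · have hAD : ω ∈ A ↔ ω ∈ D := by
          simp only [hA, hD, Set.mem_setOf_eq, hSsucc ω, h1]
          constructor <;> intro <;> linarith
        by_cases hc : ω ∈ C
        · have hd : ω ∈ D := hCD hc
          have hb : ω ∉ B := fun h => h.2 hc
          rw [if_pos (hAD.mpr hd), if_pos hc, if_neg hb, add_zero]
        · by_cases hd : ω ∈ D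
          · have hb : ω ∈ B := ⟨hd, hc⟩
            rw [if_pos (hAD.mpr hd), if_neg hc, if_pos hb, h1, zero_add]
          · have hb : ω ∉ B := fun h => hd h.1
            rw [if_neg (fun h => hd (hAD.mp h)), if_neg hc, if_neg hb, add_zero]
    have hIntC : Integrable (C.indicator (fun _ => (1 : ℝ))) μ :=
      (integrable_const (1 : ℝ)).indicator hCm
    have hIntBY : Integrable (B.indicator (Y (n + 1))) μ := (hYInt n hn).indicator hBm
    have hμA : (μ A).toReal = ∫ ω, A.indicator (fun _ => (1 : ℝ)) ω ∂μ := by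
      rw [integral_indicator_const (1 : ℝ) hAm]; simp; rfl
    have hμC : (μ C).toReal = ∫ ω, C.indicator (fun _ => (1 : ℝ)) ω ∂μ := by
      rw [integral_indicator_const (1 : ℝ) hCm]; simp; rfl
    have hsplit : (μ A).toReal = (μ C).toReal + ∫ ω in B, Y (n + 1) ω ∂μ := by
      rw [hμA, hμC, ← integral_indicator hBm, ← integral_add hIntC hIntBY]
      exact integral_congr_ae (ae_of_all _ hkey)
    have hcond : ∫ ω in B, Y (n + 1) ω ∂μ ≤ p * (μ B).toReal := by
      rw [← setIntegral_condExp (ℱ.le n) (hYInt n hn) hBF]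
      calc ∫ ω in B, (μ[Y (n + 1)|ℱ n]) ω ∂μ
          ≤ ∫ _ω in B, p ∂μ := by
            refine setIntegral_mono_ae integrable_condExp.integrableOn
              (integrable_const p).integrableOn (hY_cond n hn)
        _ = p * (μ B).toReal := by rw [setIntegral_const, smul_eq_mul, mul_comm]; rfl
    have hμB : (μ B).toReal = (μ D).toReal - (μ C).toReal := by
      rw [hB, measure_diff hCD hCm.nullMeasurableSet (measure_ne_top μ C),
        ENNReal.toReal_sub_of_le (measure_mono hCD) (measure_ne_top μ D)]
    have hCDle : (μ C).toReal ≤ (μ D).toReal :=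
      ENNReal.toReal_mono (measure_ne_top μ D) (measure_mono hCD)
    calc (μ A).toReal = (μ C).toReal + ∫ ω in B, Y (n + 1) ω ∂μ := hsplit
      _ ≤ (μ C).toReal + p * ((μ D).toReal - (μ C).toReal) := by
          rw [← hμB]; linarith [hcond]
      _ = (1 - p) * (μ C).toReal + p * (μ D).toReal := by ring
  -- the Bernoulli law facts
  have hlaw : ∀ (i : Fin T) (u : Set ℝ), MeasurableSet u →
      μ' (x i ⁻¹' u) = ENNReal.ofReal (1 - p) * u.indicator 1 0
        + ENNReal.ofReal p * u.indicator 1 1 := by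
    intro i u hu
    rw [← Measure.map_apply (hx_meas i) hu, hx_law i]
    simp [Measure.dirac_apply' _ hu]
  -- key one-step equality on the μ' side
  have claim2 : ∀ n, n < T → ∀ β : ℝ,
      (μ' {ω | β < S' (n + 1) ω}).toReal =
        (1 - p) * (μ' {ω | β < S' n ω}).toReal + p * (μ' {ω | β - 1 < S' n ω}).toReal := by
    intro n hn β
    set i : Fin T := ⟨n, hn⟩ with hi
    have hstep : ∀ ω, S' (n + 1) ω = S' n ω + x i ω := by
      intro ω
      have hset : (Finset.univ.filter (fun j : Fin T => (j : ℕ) < n + 1))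
          = insert i (Finset.univ.filter (fun j : Fin T => (j : ℕ) < n)) := by
        ext j
        simp only [Finset.mem_filter, Finset.mem_univ, true_and, Finset.mem_insert, Fin.ext_iff, hi, Fin.val_mk]
        omega
      simp only [hS'def, hset]
      rw [Finset.sum_insert (by simp [hi])]
      ring
    have hind : IndepFun (S' n) (x i) μ' := by
      have := hx_indep.indepFun_finsetSum_of_notMem hx_meas
        (s := Finset.univ.filter (fun j : Fin T => (j : ℕ) < n)) (i := i) (by simp [hi])
      convert this using 1
      ext ω
      simp [hS'def]
    have h1 : μ' {ω | x i ω = 1} = ENNReal.ofReal p := by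
      have := hlaw i {1} (measurableSet_singleton 1)
      simp [Set.indicator_apply] at this; exact this
    have h0 : μ' {ω | x i ω = 0} = ENNReal.ofReal (1 - p) := by
      have := hlaw i {0} (measurableSet_singleton 0)
      simp [Set.indicator_apply] at this; exact this
    have hbad : μ' {ω | x i ω ≠ 0 ∧ x i ω ≠ 1} = 0 := by
      have h := hlaw i ({0, 1} : Set ℝ)ᶜ (by measurability)
      have e : x i ⁻¹' ({0, 1} : Set ℝ)ᶜ = {ω | x i ω ≠ 0 ∧ x i ω ≠ 1} := by
        ext ω; simp
      rw [e] at h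
      rw [h, Set.indicator_apply, Set.indicator_apply, if_neg (by simp), if_neg (by simp)]
      simp
    set A : Set Ω' := {ω | β < S' (n + 1) ω} with hA
    set C : Set Ω' := {ω | β < S' n ω} with hC
    set D : Set Ω' := {ω | β - 1 < S' n ω} with hD
    have hCm : MeasurableSet C := measurableSet_lt measurable_const (hS'meas n)
    have hDm : MeasurableSet D := measurableSet_lt measurable_const (hS'meas n)
    have hx1m : MeasurableSet {ω | x i ω = 1} := hx_meas i (measurableSet_singleton 1)
    have hx0m : MeasurableSet {ω | x i ω = 0} := hx_meas i (measurableSet_singleton 0)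
    -- decompose A up to null set
    have hAdec : μ' A = μ' (D ∩ {ω | x i ω = 1}) + μ' (C ∩ {ω | x i ω = 0}) := by
      have hsub1 : A ∩ {ω | x i ω = 1} = D ∩ {ω | x i ω = 1} := by
        ext ω
        simp only [hA, hD, Set.mem_inter_iff, Set.mem_setOf_eq, hstep ω]
        constructor
        · rintro ⟨h, he⟩; exact ⟨by rw [he] at h; linarith, he⟩
        · rintro ⟨h, he⟩; exact ⟨by rw [he]; linarith, he⟩
      have hsub0 : A ∩ {ω | x i ω = 0} = C ∩ {ω | x i ω = 0} := by
        ext ω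
        simp only [hA, hC, Set.mem_inter_iff, Set.mem_setOf_eq, hstep ω]
        constructor
        · rintro ⟨h, he⟩; exact ⟨by rw [he] at h; linarith, he⟩
        · rintro ⟨h, he⟩; exact ⟨by rw [he]; linarith, he⟩
      have hU : μ' ({ω | x i ω = 0} ∪ {ω | x i ω = 1})ᶜ = 0 := by
        rw [← hbad]
        congr 1
        ext ω
        simp [Set.mem_compl_iff]
      have hint : μ' A = μ' (A ∩ ({ω | x i ω = 0} ∪ {ω | x i ω = 1})) :=
        (measure_inter_conull hU).symm
      have hdisj : Disjoint (A ∩ {ω | x i ω = 0}) (A ∩ {ω | x i ω = 1}) := by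
        refine Set.disjoint_left.mpr fun ω h1' h2' => ?_
        have e0 : x i ω = 0 := h1'.2
        have e1 : x i ω = 1 := h2'.2
        rw [e0] at e1; norm_num at e1
      rw [hint, Set.inter_union_distrib_left,
        measure_union hdisj ((measurableSet_lt measurable_const (hS'meas (n + 1))).inter hx1m),
        hsub1, hsub0, add_comm]
    have hind1 : μ' (D ∩ {ω | x i ω = 1}) = μ' D * ENNReal.ofReal p := by
      have : D ∩ {ω | x i ω = 1} = S' n ⁻¹' (Set.Ioi (β - 1)) ∩ x i ⁻¹' {1} := by
        ext ω; simp [hD, Set.mem_Ioi]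
      rw [this, hind.measure_inter_preimage_eq_mul _ _ measurableSet_Ioi
        (measurableSet_singleton 1)]
      rw [← h1]; rfl
    have hind0 : μ' (C ∩ {ω | x i ω = 0}) = μ' C * ENNReal.ofReal (1 - p) := by
      have : C ∩ {ω | x i ω = 0} = S' n ⁻¹' (Set.Ioi β) ∩ x i ⁻¹' {0} := by
        ext ω; simp [hC, Set.mem_Ioi]
      rw [this, hind.measure_inter_preimage_eq_mul _ _ measurableSet_Ioi
        (measurableSet_singleton 0)]
      rw [← h0]; rfl
    rw [hAdec, hind1, hind0]
    rw [ENNReal.toReal_add (by finiteness) (by finiteness), ENNReal.toReal_mul,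
      ENNReal.toReal_mul, ENNReal.toReal_ofReal hp0, ENNReal.toReal_ofReal (by linarith)]
    ring
  -- main induction
  have main : ∀ n, n ≤ T → ∀ β : ℝ,
      (μ {ω | β < S n ω}).toReal ≤ (μ' {ω | β < S' n ω}).toReal := by
    intro n
    induction n with
    | zero =>
      intro _ β
      have hS0 : ∀ ω, S 0 ω = 0 := by intro ω; simp [hSdef]
      have hS'0 : ∀ ω : Ω', S' 0 ω = 0 := by intro ω; simp [hS'def]
      by_cases hβ : β < 0
      · have e1 : {ω | β < S 0 ω} = Set.univ := by ext ω; simp [hS0, hβ]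
        have e2 : {ω : Ω' | β < S' 0 ω} = Set.univ := by ext ω; simp [hS'0, hβ]
        rw [e1, e2, measure_univ, measure_univ]
      · have e1 : {ω | β < S 0 ω} = ∅ := by ext ω; simp [hS0]; linarith
        have e2 : {ω : Ω' | β < S' 0 ω} = ∅ := by ext ω; simp [hS'0]; linarith
        rw [e1, e2]; simp
    | succ n ih =>
      intro hn β
      have hnT : n < T := hn
      have h1 := ih (le_of_lt hnT) β
      have h2 := ih (le_of_lt hnT) (β - 1)
      calc (μ {ω | β < S (n + 1) ω}).toReal
          ≤ (1 - p) * (μ {ω | β < S n ω}).toReal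
            + p * (μ {ω | β - 1 < S n ω}).toReal := claim1 n hnT β
        _ ≤ (1 - p) * (μ' {ω | β < S' n ω}).toReal
            + p * (μ' {ω | β - 1 < S' n ω}).toReal := by
            have hp1' : (0:ℝ) ≤ 1 - p := by linarith
            nlinarith
        _ = (μ' {ω | β < S' (n + 1) ω}).toReal := (claim2 n hnT β).symm
  have hfin := main T le_rfl α
  have hTfull : ∀ ω : Ω', S' T ω = ∑ i, x i ω := by
    intro ω
    simp only [hS'def]
    congr 1
    ext j
    simp [j.isLt]
  have : (μ {ω | α < S T ω}).toReal ≤ (μ' {ω | α < ∑ i, x i ω}).toReal := by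
    have e : {ω : Ω' | α < S' T ω} = {ω | α < ∑ i, x i ω} := by
      ext ω; simp [hTfull ω]
    rw [← e]; exact hfin
  have := (ENNReal.toReal_le_toReal (measure_ne_top μ _) (measure_ne_top μ' _)).mp this
  exact this
end

section
/- Let K ≥ 2 and T ≥ 2, and let B_1, …, B_{T−1} be random variables taking values in {1,…,K}, adapted to a filtration (F_t), such that P(B_t = a | F_{t−1}) ≤ 1/(K−1) almost surely for every t and every arm a. Define Z^a = Σ_{t=1}^{T−1} 1(B_t = a). Then E[ max_{a ∈ {1,…,K}} Z^a ] ≤ (T−1)/(K−1) + √( (T/2) ln( √T (K−1) ) ) + 2√T. -/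
open MeasureTheory ProbabilityTheory

lemma hoeffding_bernoulli {q l : ℝ} (hq0 : 0 ≤ q) (hq1 : q ≤ 1) (hl : 0 ≤ l) :
    1 + q * (Real.exp l - 1) ≤ Real.exp (l * q + l ^ 2 / 8) := by
  set D : ℝ → ℝ := fun x => 1 - q + q * Real.exp x with hD
  have hDpos : ∀ x, 0 < D x := by
    intro x
    rcases eq_or_lt_of_le hq1 with h | h
    · subst h; simpa [hD] using Real.exp_pos x
    · have : 0 ≤ q * Real.exp x := mul_nonneg hq0 (Real.exp_pos x).le
      simp only [hD]; linarith
  set f : ℝ → ℝ := fun x => x * q + x ^ 2 / 8 - Real.log (D x) with hf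
  set f' : ℝ → ℝ := fun x => q + x / 4 - q * Real.exp x / D x with hf'
  have hDd : ∀ x, HasDerivAt D (q * Real.exp x) x := by
    intro x
    rw [hD]; exact ((Real.hasDerivAt_exp x).const_mul q).const_add (1 - q)
  have hfd : ∀ x, HasDerivAt f (f' x) x := by
    intro x
    have h1 : HasDerivAt (fun x : ℝ => x * q + x ^ 2 / 8) (q + x / 4) x := by
      have := ((hasDerivAt_pow 2 x).div_const 8).const_add 0
      have h2 : HasDerivAt (fun x : ℝ => x * q) (q) x := by
        simpa using (hasDerivAt_id x).mul_const q
      have := h2.add ((hasDerivAt_pow 2 x).div_const 8)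
      refine this.congr_deriv ?_
      norm_num
      ring
    have h3 : HasDerivAt (fun x => Real.log (D x)) (q * Real.exp x / D x) x :=
      (hDd x).log (hDpos x).ne'
    rw [hf, hf']; exact h1.sub h3
  have hf'd : ∀ x, HasDerivAt f' (1 / 4 - (q * Real.exp x * (1 - q)) / (D x) ^ 2) x := by
    intro x
    have h1 : HasDerivAt (fun x : ℝ => q + x / 4) (1 / 4) x := by
      simpa using ((hasDerivAt_id x).div_const 4).const_add q
    have h2 : HasDerivAt (fun x => q * Real.exp x / D x)
        ((q * Real.exp x * D x - q * Real.exp x * (q * Real.exp x)) / (D x) ^ 2) x :=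
      (((Real.hasDerivAt_exp x).const_mul q)).div (hDd x) (hDpos x).ne'
    have heq : (q * Real.exp x * D x - q * Real.exp x * (q * Real.exp x)) / (D x) ^ 2
        = (q * Real.exp x * (1 - q)) / (D x) ^ 2 := by
      congr 1; simp only [hD]; ring
    rw [heq] at h2
    rw [hf']; exact h1.sub h2
  have hf''nonneg : ∀ x, 0 ≤ 1 / 4 - (q * Real.exp x * (1 - q)) / (D x) ^ 2 := by
    intro x
    have hD2 : 0 < (D x) ^ 2 := pow_pos (hDpos x) 2
    rw [sub_nonneg, div_le_iff₀ hD2]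
    have : D x = (1 - q) + q * Real.exp x := by simp [hD]
    nlinarith [sq_nonneg ((1 - q) - q * Real.exp x)]
  have hf'mono : Monotone f' :=
    monotone_of_deriv_nonneg (fun x => (hf'd x).differentiableAt)
      (fun x => by rw [(hf'd x).deriv]; exact hf''nonneg x)
  have hf'0 : f' 0 = 0 := by simp [hf', hD]
  have hf'nonneg : ∀ x ∈ Set.Ici (0:ℝ), 0 ≤ f' x := fun x hx => hf'0 ▸ hf'mono hx
  have hfmono : MonotoneOn f (Set.Ici 0) := by
    apply monotoneOn_of_deriv_nonneg (convex_Ici 0)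
      (fun x _ => ((hfd x).differentiableAt.continuousAt).continuousWithinAt)
      (fun x _ => (hfd x).differentiableAt.differentiableWithinAt)
    intro x hx
    rw [(hfd x).deriv]
    exact hf'nonneg x (le_of_lt (by simpa using hx))
  have key : f 0 ≤ f l := hfmono Set.self_mem_Ici hl hl
  have hf0 : f 0 = 0 := by simp [hf, hD]
  have hlog : Real.log (D l) ≤ l * q + l ^ 2 / 8 := by
    have := key; rw [hf0] at this; simp only [hf] at this; linarith
  have : D l ≤ Real.exp (l * q + l ^ 2 / 8) := by
    calc D l = Real.exp (Real.log (D l)) := (Real.exp_log (hDpos l)).symm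
    _ ≤ _ := Real.exp_le_exp.mpr hlog
  calc 1 + q * (Real.exp l - 1) = D l := by simp only [hD]; ring
  _ ≤ _ := this


lemma integrable_of_bdd {Ω : Type*} [MeasurableSpace Ω] {μ : Measure Ω} [IsFiniteMeasure μ]
    {f : Ω → ℝ} (hm : Measurable f) (C : ℝ) (h : ∀ ω, |f ω| ≤ C) : Integrable f μ :=
  (memLp_top_of_bound hm.aestronglyMeasurable C (Filter.Eventually.of_forall h)).integrable le_top

set_option maxHeartbeats 2000000 in
/-- Let `K ≥ 2` and `T ≥ 2`, and let `B_1, …, B_{T−1}` be random variables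
taking values in `{1,…,K}`, adapted to a filtration `(F_t)`, such that
`P(B_t = a | F_{t−1}) ≤ 1/(K−1)` almost surely for every `t` and every arm `a`. Define
`Z^a = Σ_{t=1}^{T−1} 1(B_t = a)`. Then
`E[ max_a Z^a ] ≤ (T−1)/(K−1) + √( (T/2) ln( √T (K−1) ) ) + 2√T`.
(Here `B_t` corresponds to `B (t+1)` for `t ∈ {0,…,T−2}`, and the conditional probability
of the event `{B_t = a}` given the past is expressed via the conditional expectation of
its indicator.) -/
theorem expected_max_count_bound
    {Ω : Type*} [m : MeasurableSpace Ω] (μ : Measure Ω) [IsProbabilityMeasure μ]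
    (K T : ℕ) (hK : 2 ≤ K) (hT : 2 ≤ T)
    (ℱ : Filtration ℕ m)
    (B : ℕ → Ω → Fin K)
    (hB_adapted : ∀ t < T - 1, Measurable[ℱ (t + 1)] (B (t + 1)))
    (hB_cond : ∀ t < T - 1, ∀ a : Fin K,
      μ[(fun ω => if B (t + 1) ω = a then (1 : ℝ) else 0)|ℱ t]
        ≤ᵐ[μ] fun _ => 1 / ((K : ℝ) - 1)) :
    ∫ ω, (⨆ a : Fin K,
        ∑ t ∈ Finset.range (T - 1), (if B (t + 1) ω = a then (1 : ℝ) else 0)) ∂μ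
      ≤ ((T : ℝ) - 1) / ((K : ℝ) - 1)
        + Real.sqrt (((T : ℝ) / 2) * Real.log (Real.sqrt T * ((K : ℝ) - 1)))
        + 2 * Real.sqrt T := by
  haveI : Nonempty (Fin K) := ⟨⟨0, by omega⟩⟩
  set n : ℕ := T - 1 with hn
  have hnT : (n : ℝ) = (T : ℝ) - 1 := by
    rw [hn, Nat.cast_sub (by omega), Nat.cast_one]
  have hKR : (1 : ℝ) ≤ (K : ℝ) - 1 := by
    have : (2 : ℝ) ≤ K := by exact_mod_cast hK
    linarith
  have hTR : (2 : ℝ) ≤ (T : ℝ) := by exact_mod_cast hT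
  have hTpos : (0 : ℝ) < T := by linarith
  have hsqT1 : (1 : ℝ) ≤ Real.sqrt T := by
    rw [show (1:ℝ) = Real.sqrt 1 by simp]
    exact Real.sqrt_le_sqrt (by linarith)
  set p : ℝ := 1 / ((K : ℝ) - 1) with hp
  have hp0 : 0 ≤ p := by positivity
  have hp1 : p ≤ 1 := by rw [hp]; rw [div_le_one (by linarith)]; linarith
  set L : ℝ := Real.log (Real.sqrt T * ((K : ℝ) - 1)) with hL
  have hL0 : 0 ≤ L := Real.log_nonneg (by nlinarith)
  set δ : ℝ := Real.sqrt (((T : ℝ) / 2) * L) with hδ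
  have hδ0 : 0 ≤ δ := Real.sqrt_nonneg _
  have hδsq : δ ^ 2 = ((T : ℝ) / 2) * L := Real.sq_sqrt (by positivity)
  set l : ℝ := 4 * δ / T with hldef
  have hl0 : 0 ≤ l := by positivity
  set α : ℝ := (n : ℝ) * p + δ with hα
  have hα0 : 0 ≤ α := by positivity
  set ξ : Fin K → ℕ → Ω → ℝ := fun a t ω => if B (t + 1) ω = a then (1 : ℝ) else 0 with hξ
  set Z : Fin K → Ω → ℝ := fun a ω => ∑ t ∈ Finset.range n, ξ a t ω with hZ
  have hξ01 : ∀ a t ω, 0 ≤ ξ a t ω ∧ ξ a t ω ≤ 1 := by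
    intro a t ω
    simp only [hξ]
    split <;> norm_num
  have hξmeasF : ∀ a : Fin K, ∀ t < n, Measurable[ℱ (t + 1)] (ξ a t) := by
    intro a t ht
    have hs : MeasurableSet[ℱ (t + 1)] {ω | B (t + 1) ω = a} :=
      (hB_adapted t ht) (measurableSet_singleton a)
    exact Measurable.ite hs measurable_const measurable_const
  have hξmeas : ∀ a : Fin K, ∀ t < n, Measurable (ξ a t) := fun a t ht =>
    (hξmeasF a t ht).mono (ℱ.le (t + 1)) le_rfl
  have hSmeasF : ∀ a : Fin K, ∀ j ≤ n,
      Measurable[ℱ j] (fun ω => ∑ t ∈ Finset.range j, ξ a t ω) := by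
    intro a j hj
    apply Finset.measurable_sum
    intro t ht
    have ht' : t < j := Finset.mem_range.mp ht
    exact (hξmeasF a t (by omega)).mono (ℱ.mono (by omega)) le_rfl
  have hSmeas : ∀ a : Fin K, ∀ j ≤ n, Measurable (fun ω => ∑ t ∈ Finset.range j, ξ a t ω) :=
    fun a j hj => (hSmeasF a j hj).mono (ℱ.le j) le_rfl
  have hSbound : ∀ a : Fin K, ∀ j : ℕ, ∀ ω, 0 ≤ (∑ t ∈ Finset.range j, ξ a t ω) ∧
      (∑ t ∈ Finset.range j, ξ a t ω) ≤ j := by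
    intro a j ω
    constructor
    · exact Finset.sum_nonneg fun t _ => (hξ01 a t ω).1
    · calc (∑ t ∈ Finset.range j, ξ a t ω) ≤ ∑ t ∈ Finset.range j, 1 :=
        Finset.sum_le_sum fun t _ => (hξ01 a t ω).2
      _ = j := by simp
  set C : ℝ := Real.exp (l * p + l ^ 2 / 8) with hC
  -- MGF bound by induction
  have hmgf : ∀ a : Fin K, ∀ j ≤ n,
      ∫ ω, Real.exp (l * ∑ t ∈ Finset.range j, ξ a t ω) ∂μ ≤ C ^ j := by
    intro a j
    induction j with
    | zero => intro _; simp
    | succ j ih =>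
      intro hj
      have hj' : j ≤ n := by omega
      have hjn : j < n := by omega
      have ihj := ih hj'
      set S : Ω → ℝ := fun ω => ∑ t ∈ Finset.range j, ξ a t ω with hSdef
      set f : Ω → ℝ := fun ω => Real.exp (l * S ω) with hfdef
      set g : Ω → ℝ := fun ω => Real.exp (l * ξ a j ω) with hgdef
      have hf_meas : Measurable f := ((hSmeas a j hj').const_mul l).exp
      have hg_meas : Measurable g := (((hξmeas a j hjn)).const_mul l).exp
      have hf_bdd : ∀ ω, |f ω| ≤ Real.exp (l * j) := by
        intro ω
        rw [abs_of_nonneg (Real.exp_nonneg _)]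
        exact Real.exp_le_exp.mpr (mul_le_mul_of_nonneg_left ((hSbound a j ω).2) hl0)
      have hg_bdd : ∀ ω, |g ω| ≤ Real.exp l := by
        intro ω
        rw [abs_of_nonneg (Real.exp_nonneg _)]
        exact Real.exp_le_exp.mpr (by nlinarith [(hξ01 a j ω).1, (hξ01 a j ω).2])
      have hint_f : Integrable f μ := integrable_of_bdd hf_meas _ hf_bdd
      have hint_g : Integrable g μ := integrable_of_bdd hg_meas _ hg_bdd
      have hint_fg : Integrable (f * g) μ := by
        apply integrable_of_bdd (hf_meas.mul hg_meas) (Real.exp (l * j) * Real.exp l)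
        intro ω
        rw [Pi.mul_apply, abs_mul]
        exact mul_le_mul (hf_bdd ω) (hg_bdd ω) (abs_nonneg _) (Real.exp_nonneg _)
      have hdecomp : (fun ω => Real.exp (l * ∑ t ∈ Finset.range (j+1), ξ a t ω)) = f * g := by
        funext ω
        rw [Finset.sum_range_succ, mul_add, Real.exp_add]
        rfl
      -- conditional expectation of g
      have hint_ξ : Integrable (ξ a j) μ := by
        apply integrable_of_bdd (hξmeas a j hjn) 1
        intro ω
        rw [abs_of_nonneg (hξ01 a j ω).1]; exact (hξ01 a j ω).2
      have hgrep : g = (fun _ => (1:ℝ)) + (Real.exp l - 1) • ξ a j := by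
        funext ω
        simp only [Pi.add_apply, Pi.smul_apply, smul_eq_mul, hgdef, hξ]
        by_cases h : B (j + 1) ω = a <;> simp [h]
      have hcondg : μ[g|ℱ j] =ᵐ[μ]
          (fun _ => (1:ℝ)) + (Real.exp l - 1) • μ[ξ a j|ℱ j] := by
        rw [hgrep]
        refine (condExp_add (integrable_const 1) (hint_ξ.smul _) _).trans ?_
        rw [condExp_const (ℱ.le j) (1:ℝ) (μ := μ)]
        filter_upwards [condExp_smul (Real.exp l - 1) (ξ a j) (m := ℱ j) (μ := μ)] with ω h1
        simp only [Pi.add_apply]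
        rw [h1]
      have hcondg_le : μ[g|ℱ j] ≤ᵐ[μ] fun _ => C := by
        filter_upwards [hcondg, hB_cond j hjn a] with ω h1 h2
        rw [h1]
        simp only [Pi.add_apply, Pi.smul_apply, smul_eq_mul]
        have hle : (μ[ξ a j|ℱ j]) ω ≤ p := h2
        have hexp1 : 0 ≤ Real.exp l - 1 := by
          have := Real.one_le_exp hl0; linarith
        calc 1 + (Real.exp l - 1) * (μ[ξ a j|ℱ j]) ω
            ≤ 1 + (Real.exp l - 1) * p := by nlinarith
          _ = 1 + p * (Real.exp l - 1) := by ring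
          _ ≤ C := hoeffding_bernoulli hp0 hp1 hl0
      have hf_sm : StronglyMeasurable[ℱ j] f :=
        (((hSmeasF a j hj').const_mul l).exp).stronglyMeasurable
      have hpull : μ[f * g|ℱ j] =ᵐ[μ] f * μ[g|ℱ j] :=
        condExp_mul_of_stronglyMeasurable_left hf_sm hint_fg hint_g
      have hint_fcond : Integrable (f * μ[g|ℱ j]) μ := integrable_condExp.congr hpull
      calc ∫ ω, Real.exp (l * ∑ t ∈ Finset.range (j+1), ξ a t ω) ∂μ
          = ∫ ω, (f * g) ω ∂μ := by rw [hdecomp]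
        _ = ∫ ω, (μ[f * g|ℱ j]) ω ∂μ := (integral_condExp (ℱ.le j) (f := f * g)).symm
        _ = ∫ ω, (f * μ[g|ℱ j]) ω ∂μ := integral_congr_ae hpull
        _ ≤ ∫ ω, C * f ω ∂μ := by
            apply integral_mono_ae hint_fcond (hint_f.const_mul C)
            filter_upwards [hcondg_le] with ω hω
            simp only [Pi.mul_apply]
            have hf0 : 0 ≤ f ω := Real.exp_nonneg _
            nlinarith
        _ = C * ∫ ω, f ω ∂μ := integral_const_mul C f
        _ ≤ C * C ^ j := by
            apply mul_le_mul_of_nonneg_left ihj (Real.exp_nonneg _)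
        _ = C ^ (j + 1) := by ring
  -- Chernoff tail bound
  have hZmeas : ∀ a : Fin K, Measurable (Z a) := fun a => hSmeas a n le_rfl
  have htail : ∀ a : Fin K,
      (μ {ω | α ≤ Z a ω}).toReal ≤ (Real.sqrt T * ((K : ℝ) - 1))⁻¹ := by
    intro a
    have hint_expZ : Integrable (fun ω => Real.exp (l * Z a ω)) μ := by
      apply integrable_of_bdd ((hZmeas a).const_mul l).exp (Real.exp (l * n))
      intro ω
      rw [abs_of_nonneg (Real.exp_nonneg _)]
      exact Real.exp_le_exp.mpr (mul_le_mul_of_nonneg_left ((hSbound a n ω).2) hl0)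
    have hcher := measure_ge_le_exp_mul_mgf (X := Z a) (μ := μ) (t := l) α hl0 hint_expZ
    have hmgfZ : mgf (Z a) μ l ≤ C ^ n := hmgf a n le_rfl
    have hCn : Real.exp (-l * α) * C ^ n ≤ (Real.sqrt T * ((K : ℝ) - 1))⁻¹ := by
      have hCexp : C ^ n = Real.exp ((n : ℝ) * (l * p + l ^ 2 / 8)) := by
        rw [hC, ← Real.exp_nat_mul]
      rw [hCexp, ← Real.exp_add]
      have hexponent : -l * α + (n : ℝ) * (l * p + l ^ 2 / 8) ≤ -L := by
        have h1 : -l * α + (n : ℝ) * (l * p + l ^ 2 / 8) = (n : ℝ) * l ^ 2 / 8 - l * δ := by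
          rw [hα]; ring
        rw [h1]
        have h2 : (n : ℝ) * l ^ 2 / 8 ≤ (T : ℝ) * l ^ 2 / 8 := by
          have : (n : ℝ) ≤ (T : ℝ) := by rw [hnT]; linarith
          nlinarith [sq_nonneg l]
        have h3 : (T : ℝ) * l ^ 2 / 8 - l * δ = -L := by
          rw [hldef]
          field_simp
          nlinarith [hδsq]
        linarith
      calc Real.exp (-l * α + (n : ℝ) * (l * p + l ^ 2 / 8)) ≤ Real.exp (-L) :=
            Real.exp_le_exp.mpr hexponent
        _ = (Real.sqrt T * ((K : ℝ) - 1))⁻¹ := by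
            rw [Real.exp_neg, hL, Real.exp_log (by nlinarith)]
    calc (μ {ω | α ≤ Z a ω}).toReal ≤ Real.exp (-l * α) * mgf (Z a) μ l := hcher
      _ ≤ Real.exp (-l * α) * C ^ n := by
          apply mul_le_mul_of_nonneg_left hmgfZ (Real.exp_nonneg _)
      _ ≤ _ := hCn
  -- pointwise bound on the sup and integration
  set G : Ω → ℝ := fun ω =>
    α + ∑ a : Fin K, (n : ℝ) * Set.indicator {ω' | α ≤ Z a ω'} (fun _ => (1:ℝ)) ω with hG
  have hsets : ∀ a : Fin K, MeasurableSet {ω | α ≤ Z a ω} := fun a =>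
    measurableSet_le measurable_const (hZmeas a)
  have hint_G : Integrable G μ := by
    apply Integrable.add (integrable_const α)
    apply integrable_finset_sum
    intro a _
    exact (((integrable_const (1:ℝ)).indicator (hsets a)).const_mul _)
  have hpointwise : ∀ ω, (⨆ a : Fin K, Z a ω) ≤ G ω := by
    intro ω
    apply ciSup_le
    intro a
    have hsum_nonneg : ∀ b : Fin K, b ∈ Finset.univ →
        0 ≤ (n : ℝ) * Set.indicator {ω' | α ≤ Z b ω'} (fun _ => (1:ℝ)) ω := by
      intro b _
      apply mul_nonneg (Nat.cast_nonneg n)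
      apply Set.indicator_nonneg
      intro _ _; norm_num
    by_cases h : α ≤ Z a ω
    · have hZn : Z a ω ≤ n := (hSbound a n ω).2
      have hterm : (n : ℝ) * Set.indicator {ω' | α ≤ Z a ω'} (fun _ => (1:ℝ)) ω = n := by
        rw [Set.indicator_of_mem (show ω ∈ {ω' | α ≤ Z a ω'} from h)]; ring
      have hle : (n : ℝ) * Set.indicator {ω' | α ≤ Z a ω'} (fun _ => (1:ℝ)) ω ≤
          ∑ b : Fin K, (n : ℝ) * Set.indicator {ω' | α ≤ Z b ω'} (fun _ => (1:ℝ)) ω :=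
        Finset.single_le_sum hsum_nonneg (Finset.mem_univ a)
      rw [hG]
      simp only
      rw [hterm] at hle
      linarith
    · push_neg at h
      have : 0 ≤ ∑ b : Fin K, (n : ℝ) * Set.indicator {ω' | α ≤ Z b ω'} (fun _ => (1:ℝ)) ω :=
        Finset.sum_nonneg hsum_nonneg
      rw [hG]; simp only
      linarith
  have hsup_nonneg : ∀ ω, 0 ≤ (⨆ a : Fin K, Z a ω) := by
    intro ω
    have a0 : Fin K := ⟨0, by omega⟩
    calc (0:ℝ) ≤ Z a0 ω := (hSbound a0 n ω).1
      _ ≤ ⨆ a : Fin K, Z a ω := le_ciSup (f := fun a : Fin K => Z a ω) (Set.Finite.bddAbove (Set.finite_range _)) a0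
  have hGint : ∫ ω, G ω ∂μ = α + ∑ a : Fin K, (n : ℝ) * (μ {ω | α ≤ Z a ω}).toReal := by
    rw [hG]
    rw [integral_add (integrable_const α) (by
      apply integrable_finset_sum
      intro a _
      exact (((integrable_const (1:ℝ)).indicator (hsets a)).const_mul _))]
    rw [integral_const]
    simp only [probReal_univ, ENNReal.toReal_one, smul_eq_mul, one_mul]
    congr 1
    rw [integral_finset_sum]
    · apply Finset.sum_congr rfl
      intro a _
      rw [integral_const_mul, integral_indicator_const (1:ℝ) (hsets a)]
      simp [Measure.real]
    · intro a _
      exact (((integrable_const (1:ℝ)).indicator (hsets a)).const_mul _)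
  have hmain : ∫ ω, (⨆ a : Fin K, Z a ω) ∂μ ≤ α + 2 * Real.sqrt T := by
    calc ∫ ω, (⨆ a : Fin K, Z a ω) ∂μ ≤ ∫ ω, G ω ∂μ :=
          integral_mono_of_nonneg (Filter.Eventually.of_forall hsup_nonneg) hint_G
            (Filter.Eventually.of_forall hpointwise)
      _ = α + ∑ a : Fin K, (n : ℝ) * (μ {ω | α ≤ Z a ω}).toReal := hGint
      _ ≤ α + ∑ a : Fin K, (n : ℝ) * (Real.sqrt T * ((K : ℝ) - 1))⁻¹ := by
          gcongr with a
          exact htail a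
      _ = α + (K : ℝ) * ((n : ℝ) * (Real.sqrt T * ((K : ℝ) - 1))⁻¹) := by
          rw [Finset.sum_const, Finset.card_univ, Fintype.card_fin]
          simp [nsmul_eq_mul]
      _ ≤ α + 2 * Real.sqrt T := by
          have hden : 0 < Real.sqrt T * ((K : ℝ) - 1) := by nlinarith
          have hKR2 : (2 : ℝ) ≤ K := by exact_mod_cast hK
          have hsq : Real.sqrt T * Real.sqrt T = (T : ℝ) :=
            Real.mul_self_sqrt (by positivity)
          have : (K : ℝ) * ((n : ℝ) * (Real.sqrt T * ((K : ℝ) - 1))⁻¹) ≤ 2 * Real.sqrt T := by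
            rw [← div_eq_mul_inv, mul_div_assoc']
            rw [div_le_iff₀ hden]
            rw [hnT]
            nlinarith
          linarith
  calc ∫ ω, (⨆ a : Fin K,
        ∑ t ∈ Finset.range (T - 1), (if B (t + 1) ω = a then (1 : ℝ) else 0)) ∂μ
      = ∫ ω, (⨆ a : Fin K, Z a ω) ∂μ := rfl
    _ ≤ α + 2 * Real.sqrt T := hmain
    _ = ((T : ℝ) - 1) / ((K : ℝ) - 1)
        + Real.sqrt (((T : ℝ) / 2) * Real.log (Real.sqrt T * ((K : ℝ) - 1)))
        + 2 * Real.sqrt T := by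
        rw [hα, hnT, hp, hδ, hL]
        ring
end
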